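/- Let n be an odd positive integer and z ≥ 1 an integer such that (2^z − 1) | n. Let F_{2^m} be the splitting field of x^n − 1 over F_2 and α ∈ F_{2^m} a primitive n-th root of unity. Let D be a binary linear cyclic code of length n whose complete defining set Z(D) contains the coset α·G_{2^z−1} = {α^{1+j(2^z−1)} : 0 ≤ j < n/(2^z−1)} of the subgroup G_{2^z−1} generated by α^{2^z−1}. Then D has locality r ≤ 2^{z−1} − 1; moreover, for every coordinate i ∈ {0,…,n−1} there exist at least 2^{z−1} distinct recovery sets A ⊆ {0,…,n−1}\{i} for coordinate i, each of size 2^{z−1} − 1. -/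

import Mathlib

open scoped BigOperators

namespace LRC

/-- Hamming weight of a vector. -/
noncomputable def hwt {n : ℕ} {F : Type*} [Zero F] (c : Fin n → F) : ℕ :=
  Nat.card {i : Fin n // c i ≠ 0}

/-- A linear code is cyclic if it is closed under the cyclic shift of coordinates. -/
def IsCyclicCode {n : ℕ} [NeZero n] {F : Type*} [Field F] (C : Submodule F (Fin n → F)) : Prop :=
  ∀ c ∈ C, (fun i : Fin n => c (i - 1)) ∈ C

/-- `A` is a recovery set for coordinate `i` of the code `C`. -/
def IsRecoverySet {n : ℕ} {F : Type*} [Field F] (C : Submodule F (Fin n → F)) (i : Fin n)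
    (A : Finset (Fin n)) : Prop :=
  i ∉ A ∧ ∃ φ : ((j : A) → F) → F, ∀ c ∈ C, c i = φ (fun j => c j)

/-- The code `C` has locality `r`. -/
def HasLocality {n : ℕ} {F : Type*} [Field F] (C : Submodule F (Fin n → F)) (r : ℕ) : Prop :=
  ∀ i : Fin n, ∃ A : Finset (Fin n), A.card ≤ r ∧ IsRecoverySet C i A

/-- Complete defining set of zeros of a cyclic code (locator field = symbol field). -/
def definingSet {n : ℕ} {F : Type*} [Field F] (C : Submodule F (Fin n → F)) : Set F :=
  {β | β ^ n = 1 ∧ ∀ c ∈ C, ∑ j : Fin n, c j * β ^ (j : ℕ) = 0}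

/-- Complete defining set of zeros of a cyclic code in an extension (locator) field `K`. -/
def definingSetExt (n : ℕ) {F K : Type*} [Field F] [Field K] [Algebra F K]
    (C : Submodule F (Fin n → F)) : Set K :=
  {β | β ^ n = 1 ∧ ∀ c ∈ C, ∑ j : Fin n, algebraMap F K (c j) * β ^ (j : ℕ) = 0}

/-- The cyclic code with a given set of zeros. -/
def codeOfZeros (n : ℕ) {F : Type*} [Field F] (Z : Set F) : Submodule F (Fin n → F) where
  carrier := {c | ∀ β ∈ Z, ∑ j : Fin n, c j * β ^ (j : ℕ) = 0}
  add_mem' := by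
    intro a b ha hb β hβ
    have h1 := ha β hβ
    have h2 := hb β hβ
    calc ∑ j : Fin n, (a + b) j * β ^ (j : ℕ)
        = (∑ j : Fin n, a j * β ^ (j : ℕ)) + ∑ j : Fin n, b j * β ^ (j : ℕ) := by
          rw [← Finset.sum_add_distrib]
          exact Finset.sum_congr rfl (by intro j _; simp [add_mul])
      _ = 0 := by rw [h1, h2, add_zero]
  zero_mem' := by intro β hβ; simp
  smul_mem' := by
    intro t a ha β hβ
    have h1 := ha β hβ
    calc ∑ j : Fin n, (t • a) j * β ^ (j : ℕ)
        = t * ∑ j : Fin n, a j * β ^ (j : ℕ) := by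
          rw [Finset.mul_sum]
          exact Finset.sum_congr rfl (by intro j _; simp [mul_assoc])
      _ = 0 := by rw [h1, mul_zero]

/-- Minimum distance: least Hamming weight of a nonzero codeword. -/
noncomputable def minDist {n : ℕ} {F : Type*} [Field F] (C : Submodule F (Fin n → F)) : ℕ :=
  sInf {w | ∃ c ∈ C, c ≠ 0 ∧ hwt c = w}

/-- The dual code under the standard bilinear form. -/
def dualCode {n : ℕ} {F : Type*} [Field F] (C : Submodule F (Fin n → F)) :
    Submodule F (Fin n → F) where
  carrier := {y | ∀ c ∈ C, ∑ i : Fin n, c i * y i = 0}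
  add_mem' := by
    intro a b ha hb c hc
    have h1 := ha c hc
    have h2 := hb c hc
    calc ∑ i : Fin n, c i * (a + b) i
        = (∑ i : Fin n, c i * a i) + ∑ i : Fin n, c i * b i := by
          rw [← Finset.sum_add_distrib]
          exact Finset.sum_congr rfl (by intro j _; simp [mul_add])
      _ = 0 := by rw [h1, h2, add_zero]
  zero_mem' := by intro c hc; simp
  smul_mem' := by
    intro t a ha c hc
    have h1 := ha c hc
    calc ∑ i : Fin n, c i * (t • a) i
        = t * ∑ i : Fin n, c i * a i := by
          rw [Finset.mul_sum]
          exact Finset.sum_congr rfl (by intro j _; simp [mul_assoc]; ring)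
      _ = 0 := by rw [h1, mul_zero]




private lemma card_le_natDegree_of_eval_eq_zero {K : Type*} [Field K] (p : Polynomial K)
    (hp : p ≠ 0) (S : Finset K) (h : ∀ x ∈ S, p.eval x = 0) : S.card ≤ p.natDegree := by
  classical
  have hsub : S ⊆ p.roots.toFinset := by
    intro x hx
    rw [Multiset.mem_toFinset, Polynomial.mem_roots hp]
    exact h x hx
  calc S.card ≤ p.roots.toFinset.card := Finset.card_le_card hsub
    _ ≤ Multiset.card p.roots := Multiset.toFinset_card_le _
    _ ≤ p.natDegree := Polynomial.card_roots' p

open Classical in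
private lemma geom_sum_of_pow_eq_one {K : Type*} [Field K] (x : K) (e : ℕ) (hx : x ^ e = 1) :
    ∑ k ∈ Finset.range e, x ^ k = if x = 1 then (e : K) else 0 := by
  classical
  by_cases h1 : x = 1
  · simp [h1]
  · rw [if_neg h1]
    have h := geom_sum_mul x e
    rw [hx, sub_self] at h
    rcases mul_eq_zero.mp h with h' | h'
    · exact h'
    · exact absurd (sub_eq_zero.mp h') h1

open Fin.NatCast

/-- a binary cyclic code whose complete defining set contains the coset
`α·G_{2^z−1}` has locality at most `2^{z−1} − 1`, and every coordinate has at least `2^{z−1}`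
recovery sets of size `2^{z−1} − 1`. -/
theorem stmt4 {K : Type*} [Field K] [Fintype K] [Algebra (ZMod 2) K]
    (n z m : ℕ) [NeZero n] (hodd : Odd n) (hz : 1 ≤ z) (hzn : (2 ^ z - 1) ∣ n)
    (hK : Fintype.card K = 2 ^ m)
    -- `m` is the multiplicative order of 2 modulo n, i.e. `F_{2^m}` is the splitting field
    -- of `x^n − 1` over `F_2`
    (hmord : n ∣ 2 ^ m - 1) (hmmin : ∀ m' : ℕ, 0 < m' → n ∣ 2 ^ m' - 1 → m ≤ m')
    (α : K) (hα : IsPrimitiveRoot α n)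
    (D : Submodule (ZMod 2) (Fin n → ZMod 2)) (hcyc : IsCyclicCode D)
    (hcoset : {β | ∃ j : ℕ, j < n / (2 ^ z - 1) ∧ β = α ^ (1 + j * (2 ^ z - 1))} ⊆
      definingSetExt n D) :
    HasLocality D (2 ^ (z - 1) - 1) ∧
    ∀ i : Fin n, ∃ 𝒜 : Finset (Finset (Fin n)), 2 ^ (z - 1) ≤ 𝒜.card ∧
      ∀ A ∈ 𝒜, IsRecoverySet D i A ∧ A.card = 2 ^ (z - 1) - 1 := by
  classical
  set s : ℕ := 2 ^ z - 1 with hs_def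
  set e : ℕ := n / (2 ^ z - 1) with he_def
  have h2z : 2 ≤ 2 ^ z := by
    calc 2 = 2 ^ 1 := rfl
    _ ≤ 2 ^ z := Nat.pow_le_pow_right (by norm_num) hz
  have h2pow : 2 ^ z = 2 * 2 ^ (z - 1) := by
    conv_lhs => rw [show z = (z - 1) + 1 by omega]
    rw [pow_succ]
    ring
  have hs : 0 < s := by omega
  have hn0 : 0 < n := Nat.pos_of_ne_zero (NeZero.ne n)
  have hse : s * e = n := Nat.mul_div_cancel' hzn
  have he : 0 < e := by
    rcases Nat.eq_zero_or_pos e with h | h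
    · rw [h, Nat.mul_zero] at hse; omega
    · exact h
  have heodd : Odd e := by
    rcases Nat.even_or_odd e with h | h
    · exfalso
      have : Even n := by rw [← hse]; exact h.mul_left s
      exact (Nat.not_even_iff_odd.mpr hodd) this
    · exact h
  have hinj : Function.Injective (algebraMap (ZMod 2) K) := (algebraMap (ZMod 2) K).injective
  haveI : CharP K 2 := charP_of_injective_algebraMap hinj 2
  haveI : Fact (Nat.Prime 2) := ⟨Nat.prime_two⟩
  have h2K : (2 : K) = 0 := CharTwo.two_eq_zero
  have h11 : (1 : K) + 1 = 0 := by rw [one_add_one_eq_two, h2K]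
  have heK : ((e : ℕ) : K) = 1 := by
    obtain ⟨q, hq⟩ := heodd
    rw [hq]
    push_cast
    rw [h2K]
    ring
  -- powers of α
  have hα1 : α ^ n = 1 := hα.pow_eq_one
  have hpowmod : ∀ x : ℕ, α ^ x = α ^ (x % n) := by
    intro x
    conv_lhs => rw [← Nat.div_add_mod x n]
    rw [pow_add, pow_mul, hα1, one_pow, one_mul]
  set γ : K := α ^ e with hγ_def
  have hγ : IsPrimitiveRoot γ s := hα.pow hn0 (by rw [← hse]; ring)
  have hγ1 : γ ^ s = 1 := hγ.pow_eq_one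
  have hγ0 : γ ≠ 0 := by
    intro h
    rw [h, zero_pow (by omega)] at hγ1
    exact zero_ne_one hγ1
  set δ : K := α ^ s with hδ_def
  have hδ : IsPrimitiveRoot δ e := hα.pow hn0 (by rw [← hse])
  have hδe : δ ^ e = 1 := hδ.pow_eq_one
  have hen : e ∣ n := ⟨s, by rw [← hse]; ring⟩
  have hdvd_iff : ∀ x : ℕ, e ∣ x ↔ e ∣ x % n := by
    intro x
    conv_lhs => rw [← Nat.div_add_mod x n]
    exact Nat.dvd_add_right (hen.mul_right _)
  have hfval : ∀ (i : Fin n) (t : ℕ),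
      ((i + ((t * e : ℕ) : Fin n) : Fin n) : ℕ) = ((i : ℕ) + t * e) % n := by
    intro i t
    rw [Fin.add_def, Fin.val_natCast]
    conv_rhs => rw [Nat.add_mod, Nat.mod_eq_of_lt i.isLt]
  -- the key parity-check relation
  have key : ∀ c ∈ D, ∀ i : Fin n,
      ∑ t ∈ Finset.range s, algebraMap (ZMod 2) K (c (i + ((t * e : ℕ) : Fin n))) * γ ^ t = 0 := by
    intro c hc i
    have Ek : ∀ k ∈ Finset.range e,
        ∑ j : Fin n, algebraMap (ZMod 2) K (c j) * (α ^ (1 + k * s)) ^ (j : ℕ) = 0 := by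
      intro k hk
      exact (hcoset ⟨k, Finset.mem_range.mp hk, rfl⟩).2 c hc
    set w : ℕ := n - (i : ℕ) with hw_def
    have hiw : (i : ℕ) + w = n := by
      have := i.isLt
      omega
    have hmodeq : ∀ t : ℕ, (w + ((i : ℕ) + t * e) % n) % n = (t * e) % n := by
      intro t
      have m1 : (w + ((i : ℕ) + t * e) % n) % n = (w + ((i : ℕ) + t * e)) % n :=
        (Nat.mod_modEq _ n).add_left w
      rw [m1, show w + ((i : ℕ) + t * e) = n + t * e by omega, Nat.add_mod_left]
    have calc1 : (0 : K) = ∑ j ∈ Finset.univ.filter (fun j : Fin n => e ∣ (w + (j : ℕ))),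
        algebraMap (ZMod 2) K (c j) * α ^ (w + (j : ℕ)) := by
      have s1 : (0 : K) = ∑ k ∈ Finset.range e, α ^ ((1 + k * s) * w) *
          ∑ j : Fin n, algebraMap (ZMod 2) K (c j) * (α ^ (1 + k * s)) ^ (j : ℕ) := by
        symm
        apply Finset.sum_eq_zero
        intro k hk
        rw [Ek k hk, mul_zero]
      rw [s1]
      have s2 : ∀ k ∈ Finset.range e, α ^ ((1 + k * s) * w) *
          ∑ j : Fin n, algebraMap (ZMod 2) K (c j) * (α ^ (1 + k * s)) ^ (j : ℕ)
          = ∑ j : Fin n, algebraMap (ZMod 2) K (c j) *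
              (α ^ (w + (j : ℕ)) * ((δ ^ (w + (j : ℕ))) ^ k)) := by
        intro k _
        rw [Finset.mul_sum]
        apply Finset.sum_congr rfl
        intro j _
        have hxp : α ^ ((1 + k * s) * w) * (α ^ (1 + k * s)) ^ (j : ℕ)
            = α ^ (w + (j : ℕ)) * (δ ^ (w + (j : ℕ))) ^ k := by
          rw [hδ_def, ← pow_mul, ← pow_mul, ← pow_mul, ← pow_add, ← pow_add]
          congr 1
          ring
        calc α ^ ((1 + k * s) * w) * (algebraMap (ZMod 2) K (c j) * (α ^ (1 + k * s)) ^ (j : ℕ))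
            = algebraMap (ZMod 2) K (c j) * (α ^ ((1 + k * s) * w) * (α ^ (1 + k * s)) ^ (j : ℕ)) := by
              ring
          _ = algebraMap (ZMod 2) K (c j) * (α ^ (w + (j : ℕ)) * (δ ^ (w + (j : ℕ))) ^ k) := by
              rw [hxp]
      rw [Finset.sum_congr rfl s2, Finset.sum_comm]
      have s4 : ∀ j : Fin n, ∑ k ∈ Finset.range e, algebraMap (ZMod 2) K (c j) *
          (α ^ (w + (j : ℕ)) * ((δ ^ (w + (j : ℕ))) ^ k))
          = if e ∣ (w + (j : ℕ)) then algebraMap (ZMod 2) K (c j) * α ^ (w + (j : ℕ)) else 0 := by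
        intro j
        have hgeo : ∑ k ∈ Finset.range e, (δ ^ (w + (j : ℕ))) ^ k
            = if δ ^ (w + (j : ℕ)) = 1 then ((e : ℕ) : K) else 0 := by
          apply geom_sum_of_pow_eq_one
          rw [← pow_mul, mul_comm, pow_mul, hδe, one_pow]
        have : ∑ k ∈ Finset.range e, algebraMap (ZMod 2) K (c j) *
            (α ^ (w + (j : ℕ)) * ((δ ^ (w + (j : ℕ))) ^ k))
            = algebraMap (ZMod 2) K (c j) * α ^ (w + (j : ℕ)) *
              ∑ k ∈ Finset.range e, (δ ^ (w + (j : ℕ))) ^ k := by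
          rw [Finset.mul_sum]
          apply Finset.sum_congr rfl
          intro k _
          ring
        rw [this, hgeo]
        by_cases hd : e ∣ (w + (j : ℕ))
        · rw [if_pos ((hδ.pow_eq_one_iff_dvd _).mpr hd), if_pos hd, heK, mul_one]
        · rw [if_neg (fun h => hd ((hδ.pow_eq_one_iff_dvd _).mp h)), if_neg hd, mul_zero]
      rw [Finset.sum_congr rfl (fun j _ => s4 j)]
      rw [Finset.sum_filter]
    rw [calc1]
    refine Finset.sum_bij (fun t _ => i + ((t * e : ℕ) : Fin n)) ?_ ?_ ?_ ?_
    · intro t _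
      rw [Finset.mem_filter]
      refine ⟨Finset.mem_univ _, ?_⟩
      rw [hfval i t, hdvd_iff, hmodeq t, ← hdvd_iff]
      exact dvd_mul_left e t
    · intro t ht t' ht' hh
      have h2 : ((t * e : ℕ) : Fin n) = ((t' * e : ℕ) : Fin n) := add_left_cancel hh
      have h3 : (t * e) % n = (t' * e) % n := by
        have := congrArg Fin.val h2
        rwa [Fin.val_natCast, Fin.val_natCast] at this
      have hlt : t * e < n := by
        rw [← hse]
        exact (Nat.mul_lt_mul_right he).mpr (Finset.mem_range.mp ht)
      have hlt' : t' * e < n := by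
        rw [← hse]
        exact (Nat.mul_lt_mul_right he).mpr (Finset.mem_range.mp ht')
      rw [Nat.mod_eq_of_lt hlt, Nat.mod_eq_of_lt hlt'] at h3
      exact Nat.eq_of_mul_eq_mul_right he h3
    · intro b hb
      have hbdvd : e ∣ (w + (b : ℕ)) := (Finset.mem_filter.mp hb).2
      refine ⟨((w + (b : ℕ)) / e) % s, Finset.mem_range.mpr (Nat.mod_lt _ hs), ?_⟩
      set t : ℕ := ((w + (b : ℕ)) / e) % s with ht_def
      have h1 : (w + (b : ℕ)) / e ≡ t [MOD s] := (Nat.mod_modEq _ s).symm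
      have h2 : (w + (b : ℕ)) / e * e ≡ t * e [MOD s * e] := h1.mul_right' e
      rw [Nat.div_mul_cancel hbdvd, hse] at h2
      have h3 : ((i : ℕ) + t * e) % n = ((i : ℕ) + (w + (b : ℕ))) % n :=
        (h2.symm.add_left (i : ℕ))
      apply Fin.ext
      rw [hfval i t, h3, show (i : ℕ) + (w + (b : ℕ)) = n + (b : ℕ) by omega,
        Nat.add_mod_left, Nat.mod_eq_of_lt b.isLt]
    · intro t ht
      congr 1
      rw [hγ_def, ← pow_mul]
      rw [hpowmod (w + _), hfval i t, hmodeq t, ← hpowmod (t * e), mul_comm]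
  -- the trace polynomial
  set p : Polynomial K := ∑ j ∈ Finset.range z, Polynomial.X ^ (2 ^ j) with hp_def
  set Tr : K → K := fun x => ∑ j ∈ Finset.range z, x ^ (2 ^ j) with hTr_def
  have hpeval : ∀ x : K, p.eval x = Tr x := by
    intro x
    rw [hp_def, Polynomial.eval_finset_sum]
    simp [hTr_def]
  have hTr0 : Tr 0 = 0 := by
    rw [hTr_def]
    apply Finset.sum_eq_zero
    intro j _
    exact zero_pow (by positivity)
  have hTradd : ∀ x y : K, Tr (x + y) = Tr x + Tr y := by
    intro x y
    rw [hTr_def]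
    simp only
    rw [← Finset.sum_add_distrib]
    apply Finset.sum_congr rfl
    intro j _
    exact add_pow_char_pow x y 2 j
  let TrHom : K →+ K := { toFun := Tr, map_zero' := hTr0, map_add' := hTradd }
  have hTrsum : ∀ (S : Finset ℕ) (f : ℕ → K), Tr (∑ x ∈ S, f x) = ∑ x ∈ S, Tr (f x) :=
    fun S f => map_sum TrHom f S
  have hpdeg : p.natDegree ≤ 2 ^ (z - 1) := by
    apply Polynomial.natDegree_sum_le_of_forall_le
    intro j hj
    rw [Polynomial.natDegree_X_pow]
    exact Nat.pow_le_pow_right (by norm_num) (by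
      have := Finset.mem_range.mp hj; omega)
  have hcoeffp : p.coeff (2 ^ (z - 1)) = 1 := by
    rw [hp_def, Polynomial.finset_sum_coeff]
    have hc : ∀ j ∈ Finset.range z,
        (Polynomial.X ^ (2 ^ j) : Polynomial K).coeff (2 ^ (z - 1))
          = if j = z - 1 then 1 else 0 := by
      intro j _
      rw [Polynomial.coeff_X_pow]
      congr 1
      simp only [eq_iff_iff]
      constructor
      · intro h
        exact (Nat.pow_right_injective (le_refl 2) h.symm)
      · intro h
        rw [h]
    rw [Finset.sum_congr rfl hc, Finset.sum_ite_eq' (Finset.range z) (z - 1) (fun _ => (1 : K)),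
      if_pos (Finset.mem_range.mpr (by omega))]
  have hp0 : p ≠ 0 := by
    intro h
    rw [h, Polynomial.coeff_zero] at hcoeffp
    exact zero_ne_one hcoeffp
  set p1 : Polynomial K := p + 1 with hp1_def
  have hp1eval : ∀ x : K, p1.eval x = Tr x + 1 := by
    intro x
    rw [hp1_def, Polynomial.eval_add, Polynomial.eval_one, hpeval]
  have hp1deg : p1.natDegree ≤ 2 ^ (z - 1) := by
    refine le_trans (Polynomial.natDegree_add_le p 1) ?_
    simp only [Polynomial.natDegree_one, sup_le_iff]
    exact ⟨hpdeg, Nat.zero_le _⟩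
  have hp10 : p1 ≠ 0 := by
    intro h
    have hco : p1.coeff (2 ^ (z - 1)) = 1 := by
      rw [hp1_def, Polynomial.coeff_add, hcoeffp, Polynomial.coeff_one,
        if_neg (by positivity)]
      ring
    rw [h, Polynomial.coeff_zero] at hco
    exact zero_ne_one hco
  have hsplus : s + 1 = 2 ^ z := by omega
  have hfix : ∀ v : ℕ, (γ ^ v) ^ (2 ^ z) = γ ^ v := by
    intro v
    rw [← pow_mul, show v * 2 ^ z = s * v + v by rw [← hsplus]; ring,
      pow_add, pow_mul, hγ1, one_pow, one_mul]
  have hdich : ∀ x : K, x ^ (2 ^ z) = x → Tr x = 0 ∨ Tr x = 1 := by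
    intro x hx
    have h1 : Tr x ^ 2 = ∑ j ∈ Finset.range z, x ^ (2 ^ (j + 1)) := by
      rw [hTr_def]
      simp only
      rw [sum_pow_char 2 (Finset.range z) (fun j => x ^ (2 ^ j))]
      apply Finset.sum_congr rfl
      intro j _
      rw [← pow_mul, pow_succ]
    have h2 : Tr x + x ^ (2 ^ z) = (∑ j ∈ Finset.range z, x ^ (2 ^ (j + 1))) + x ^ (2 ^ 0) := by
      rw [hTr_def]
      simp only
      rw [← Finset.sum_range_succ, Finset.sum_range_succ']
    have h3 : Tr x ^ 2 + x ^ (2 ^ 0) = Tr x + x ^ (2 ^ z) := by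
      rw [h1, h2]
    rw [hx, pow_zero, pow_one] at h3
    have hsq : Tr x ^ 2 = Tr x := add_right_cancel h3
    have hfac : Tr x * (Tr x - 1) = 0 := by
      rw [mul_sub, mul_one, ← sq, hsq, sub_self]
    rcases mul_eq_zero.mp hfac with h | h
    · exact Or.inl h
    · exact Or.inr (sub_eq_zero.mp h)
  have hγfix : ∀ v : ℕ, Tr (γ ^ v) = 0 ∨ Tr (γ ^ v) = 1 := fun v => hdich _ (hfix v)
  -- counting
  have hQcard : ∀ u : ℕ,
      ((Finset.range s).filter (fun t => Tr (γ ^ (u + t)) = 1)).card = 2 ^ (z - 1) := by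
    intro u
    set Q1 := (Finset.range s).filter (fun t => Tr (γ ^ (u + t)) = 1) with hQ1
    set Q0 := (Finset.range s).filter (fun t => ¬ Tr (γ ^ (u + t)) = 1) with hQ0
    have hsum : Q1.card + Q0.card = s := by
      rw [hQ1, hQ0, Finset.card_filter_add_card_filter_not, Finset.card_range]
    have hginj : Set.InjOn (fun t => γ ^ (u + t)) (Finset.range s : Set ℕ) := by
      intro t ht t' ht' hh
      simp only [Finset.coe_range, Set.mem_Iio] at ht ht'
      simp only [pow_add] at hh
      have := mul_left_cancel₀ (pow_ne_zero u hγ0) hh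
      exact hγ.pow_inj ht ht' this
    have h1le : Q1.card ≤ 2 ^ (z - 1) := by
      have himg : (Q1.image (fun t => γ ^ (u + t))).card = Q1.card :=
        Finset.card_image_of_injOn (hginj.mono (by
          intro x hx
          simp only [Finset.mem_coe] at hx ⊢
          exact Finset.mem_of_mem_filter x hx))
      rw [← himg]
      refine le_trans (card_le_natDegree_of_eval_eq_zero p1 hp10 _ ?_) hp1deg
      intro x hx
      obtain ⟨t, ht, rfl⟩ := Finset.mem_image.mp hx
      rw [hp1eval, (Finset.mem_filter.mp ht).2, h11]
    have h0le : Q0.card + 1 ≤ 2 ^ (z - 1) := by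
      have h0notin : (0 : K) ∉ Q0.image (fun t => γ ^ (u + t)) := by
        simp only [Finset.mem_image, not_exists]
        intro t
        rintro ⟨ht, h⟩
        exact pow_ne_zero _ hγ0 h
      have himg : (Q0.image (fun t => γ ^ (u + t))).card = Q0.card :=
        Finset.card_image_of_injOn (hginj.mono (by
          intro x hx
          simp only [Finset.mem_coe] at hx ⊢
          exact Finset.mem_of_mem_filter x hx))
      have hcard : (insert (0 : K) (Q0.image (fun t => γ ^ (u + t)))).card = Q0.card + 1 := by
        rw [Finset.card_insert_of_notMem h0notin, himg]
      rw [← hcard]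
      refine le_trans (card_le_natDegree_of_eval_eq_zero p hp0 _ ?_) hpdeg
      intro x hx
      rcases Finset.mem_insert.mp hx with rfl | hx
      · rw [hpeval, hTr0]
      · obtain ⟨t, ht, rfl⟩ := Finset.mem_image.mp hx
        rw [hpeval]
        rcases hγfix (u + t) with h | h
        · exact h
        · exact absurd h (Finset.mem_filter.mp ht).2
    omega
  -- main construction
  have main : ∀ i : Fin n, ∃ 𝒜 : Finset (Finset (Fin n)), 2 ^ (z - 1) ≤ 𝒜.card ∧
      ∀ A ∈ 𝒜, IsRecoverySet D i A ∧ A.card = 2 ^ (z - 1) - 1 := by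
    intro i
    set fmap : ℕ → Fin n := fun t => i + ((t * e : ℕ) : Fin n) with hfmap_def
    have hfmap_inj : ∀ t ∈ Finset.range s, ∀ t' ∈ Finset.range s, fmap t = fmap t' → t = t' := by
      intro t ht t' ht' hh
      have h2 : ((t * e : ℕ) : Fin n) = ((t' * e : ℕ) : Fin n) := add_left_cancel hh
      have h3 : (t * e) % n = (t' * e) % n := by
        have := congrArg Fin.val h2
        rwa [Fin.val_natCast, Fin.val_natCast] at this
      have hlt : t * e < n := by
        rw [← hse]; exact (Nat.mul_lt_mul_right he).mpr (Finset.mem_range.mp ht)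
      have hlt' : t' * e < n := by
        rw [← hse]; exact (Nat.mul_lt_mul_right he).mpr (Finset.mem_range.mp ht')
      rw [Nat.mod_eq_of_lt hlt, Nat.mod_eq_of_lt hlt'] at h3
      exact Nat.eq_of_mul_eq_mul_right he h3
    have hfmap0 : fmap 0 = i := by
      rw [hfmap_def]
      simp
    have hfmap_ne : ∀ t, 0 < t → t < s → fmap t ≠ i := by
      intro t ht0 hts hh
      have h2 : ((t * e : ℕ) : Fin n) = 0 := by
        have : i + ((t * e : ℕ) : Fin n) = i + 0 := by rw [add_zero]; exact hh
        exact add_left_cancel this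
      have h3 : (t * e) % n = 0 := by
        have := congrArg Fin.val h2
        rwa [Fin.val_natCast, Fin.val_zero] at this
      have hlt : t * e < n := by
        rw [← hse]; exact (Nat.mul_lt_mul_right he).mpr hts
      rw [Nat.mod_eq_of_lt hlt] at h3
      have : 0 < t * e := Nat.mul_pos ht0 he
      omega
    set B : ℕ → Finset ℕ :=
      fun u => (Finset.range s).filter (fun t => t ≠ 0 ∧ Tr (γ ^ (u + t)) = 1) with hB
    set A : ℕ → Finset (Fin n) := fun u => (B u).image fmap with hA
    have hBsub : ∀ u, (B u : Set ℕ) ⊆ (Finset.range s : Set ℕ) := by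
      intro u x hx
      simp only [Finset.mem_coe] at hx ⊢
      exact Finset.mem_of_mem_filter x hx
    have hfinjOn : ∀ u, Set.InjOn fmap (B u : Set ℕ) := by
      intro u t ht t' ht' hh
      exact hfmap_inj t (hBsub u ht) t' (hBsub u ht') hh
    set H1 : Finset ℕ := (Finset.range s).filter (fun u => Tr (γ ^ u) = 1) with hH1
    have hH1card : H1.card = 2 ^ (z - 1) := by
      rw [← hQcard 0, hH1]
      congr 1
      apply Finset.filter_congr
      intro t _
      rw [zero_add]
    have hBcard : ∀ u ∈ H1, (B u).card = 2 ^ (z - 1) - 1 := by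
      intro u hu
      have h0mem : 0 ∈ (Finset.range s).filter (fun t => Tr (γ ^ (u + t)) = 1) := by
        rw [Finset.mem_filter]
        exact ⟨Finset.mem_range.mpr hs, by rw [Nat.add_zero]; exact (Finset.mem_filter.mp hu).2⟩
      have hBeq : B u = ((Finset.range s).filter (fun t => Tr (γ ^ (u + t)) = 1)).erase 0 := by
        ext t
        simp only [hB, Finset.mem_erase, Finset.mem_filter]
        tauto
      rw [hBeq, Finset.card_erase_of_mem h0mem, hQcard u]
    have hAcard : ∀ u ∈ H1, (A u).card = 2 ^ (z - 1) - 1 := by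
      intro u hu
      rw [hA]
      simp only
      rw [Finset.card_image_of_injOn (hfinjOn u), hBcard u hu]
    -- recovery property
    have hrec : ∀ u ∈ H1, IsRecoverySet D i (A u) := by
      intro u hu
      constructor
      · rw [hA]
        simp only [Finset.mem_image, not_exists]
        intro t
        rintro ⟨htB, hteq⟩
        have hm := Finset.mem_filter.mp htB
        exact hfmap_ne t (Nat.pos_of_ne_zero hm.2.1) (Finset.mem_range.mp hm.1) hteq
      · refine ⟨fun v => ∑ j : (A u : Finset (Fin n)), v j, ?_⟩
        intro c hc
        have hkey := key c hc i
        have step1 : ∑ t ∈ Finset.range s,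
            algebraMap (ZMod 2) K (c (fmap t)) * γ ^ (u + t) = 0 := by
          have hfac : ∑ t ∈ Finset.range s, algebraMap (ZMod 2) K (c (fmap t)) * γ ^ (u + t)
              = γ ^ u * ∑ t ∈ Finset.range s, algebraMap (ZMod 2) K (c (fmap t)) * γ ^ t := by
            rw [Finset.mul_sum]
            apply Finset.sum_congr rfl
            intro t _
            rw [pow_add]
            ring
          rw [hfac, hkey, mul_zero]
        have step2 : ∑ t ∈ Finset.range s,
            Tr (algebraMap (ZMod 2) K (c (fmap t)) * γ ^ (u + t)) = 0 := by
          rw [← hTrsum, step1, hTr0]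
        have hz01 : ∀ v : ZMod 2, v = 0 ∨ v = 1 := by
          intro v
          fin_cases v
          · exact Or.inl rfl
          · exact Or.inr rfl
        have step3 : ∀ t : ℕ, Tr (algebraMap (ZMod 2) K (c (fmap t)) * γ ^ (u + t))
            = algebraMap (ZMod 2) K (c (fmap t)) * Tr (γ ^ (u + t)) := by
          intro t
          rcases hz01 (c (fmap t)) with h | h <;> rw [h]
          · rw [map_zero, zero_mul, zero_mul, hTr0]
          · rw [map_one, one_mul, one_mul]
        have step4 : (0 : K) = ∑ t ∈ (Finset.range s).filter (fun t => Tr (γ ^ (u + t)) = 1),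
            algebraMap (ZMod 2) K (c (fmap t)) := by
          have e1 : ∑ t ∈ Finset.range s,
              (if Tr (γ ^ (u + t)) = 1 then algebraMap (ZMod 2) K (c (fmap t)) else 0)
              = ∑ t ∈ Finset.range s,
                Tr (algebraMap (ZMod 2) K (c (fmap t)) * γ ^ (u + t)) := by
            apply Finset.sum_congr rfl
            intro t _
            rw [step3 t]
            rcases hγfix (u + t) with h | h <;> simp [h]
          rw [Finset.sum_filter, e1, step2]
        have hsplit : (Finset.range s).filter (fun t => Tr (γ ^ (u + t)) = 1)
            = insert 0 (B u) := by
          ext t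
          simp only [hB, Finset.mem_insert, Finset.mem_filter, Finset.mem_range]
          constructor
          · rintro ⟨hts, htr⟩
            rcases Nat.eq_zero_or_pos t with rfl | ht0
            · exact Or.inl rfl
            · exact Or.inr ⟨hts, by omega, htr⟩
          · rintro (rfl | ⟨hts, _, htr⟩)
            · exact ⟨hs, by rw [Nat.add_zero]; exact (Finset.mem_filter.mp hu).2⟩
            · exact ⟨hts, htr⟩
        have h0notinB : (0 : ℕ) ∉ B u := by
          simp [hB]
        rw [hsplit, Finset.sum_insert h0notinB, hfmap0] at step4
        have step6 : algebraMap (ZMod 2) K (c i)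
            = ∑ t ∈ B u, algebraMap (ZMod 2) K (c (fmap t)) := by
          have h' := step4.symm
          have := eq_neg_of_add_eq_zero_left h'
          rwa [CharTwo.neg_eq] at this
        have step7 : c i = ∑ j ∈ A u, c j := by
          apply hinj
          rw [map_sum, step6, hA]
          simp only
          rw [Finset.sum_image (fun t ht t' ht' hh => hfinjOn u ht ht' hh)]
        show c i = ∑ j : (A u : Finset (Fin n)), c j
        rw [Finset.sum_coe_sort (A u) c]
        exact step7
    -- distinctness
    have hAinjOn : Set.InjOn A (H1 : Set ℕ) := by
      intro u hu u' hu' hAA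
      simp only [Finset.mem_coe] at hu hu'
      by_contra hne
      have hus : u < s := Finset.mem_range.mp (Finset.mem_of_mem_filter u hu)
      have hus' : u' < s := Finset.mem_range.mp (Finset.mem_of_mem_filter u' hu')
      have hBB : B u = B u' := by
        ext t
        constructor
        · intro ht
          have hmem : fmap t ∈ A u' := by
            rw [← hAA, hA]
            exact Finset.mem_image_of_mem _ ht
          rw [hA] at hmem
          simp only [Finset.mem_image] at hmem
          obtain ⟨t', ht', heq⟩ := hmem
          have : t' = t := hfmap_inj t' (Finset.mem_of_mem_filter t' ht') t
            (Finset.mem_of_mem_filter t ht) heq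
          rwa [← this]
        · intro ht
          have hmem : fmap t ∈ A u := by
            rw [hAA, hA]
            exact Finset.mem_image_of_mem _ ht
          rw [hA] at hmem
          simp only [Finset.mem_image] at hmem
          obtain ⟨t', ht', heq⟩ := hmem
          have : t' = t := hfmap_inj t' (Finset.mem_of_mem_filter t' ht') t
            (Finset.mem_of_mem_filter t ht) heq
          rwa [← this]
      have hTreq : ∀ t, t < s → Tr (γ ^ (u + t)) = Tr (γ ^ (u' + t)) := by
        intro t hts
        rcases Nat.eq_zero_or_pos t with rfl | ht0
        · rw [Nat.add_zero, Nat.add_zero, (Finset.mem_filter.mp hu).2,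
            (Finset.mem_filter.mp hu').2]
        · have hmem : t ∈ B u ↔ t ∈ B u' := by rw [hBB]
          simp only [hB, Finset.mem_filter, Finset.mem_range] at hmem
          have hiff : Tr (γ ^ (u + t)) = 1 ↔ Tr (γ ^ (u' + t)) = 1 := by
            constructor
            · intro h
              exact (hmem.mp ⟨hts, by omega, h⟩).2.2
            · intro h
              exact (hmem.mpr ⟨hts, by omega, h⟩).2.2
          rcases hγfix (u + t) with h | h <;> rcases hγfix (u' + t) with h' | h'
          · rw [h, h']
          · exfalso
            rw [h] at hiff
            exact zero_ne_one (hiff.mpr h')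
          · exfalso
            rw [h'] at hiff
            exact zero_ne_one (hiff.mp h)
          · rw [h, h']
      set ζ : K := γ ^ u + γ ^ u' with hζ
      have hζ0 : ζ ≠ 0 := by
        intro h
        have heq : γ ^ u = γ ^ u' := by
          have := eq_neg_of_add_eq_zero_left h
          rwa [CharTwo.neg_eq] at this
        exact hne (hγ.pow_inj hus hus' heq)
      have hTrz : ∀ t, t < s → Tr (ζ * γ ^ t) = 0 := by
        intro t hts
        have hx : ζ * γ ^ t = γ ^ (u + t) + γ ^ (u' + t) := by
          rw [hζ, add_mul, pow_add, pow_add]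
        rw [hx, hTradd, hTreq t hts]
        exact CharTwo.add_self_eq_zero _
      have h0notin : (0 : K) ∉ (Finset.range s).image (fun t => ζ * γ ^ t) := by
        simp only [Finset.mem_image, not_exists]
        intro t
        rintro ⟨ht, h⟩
        exact mul_ne_zero hζ0 (pow_ne_zero t hγ0) h
      have hinjim : Set.InjOn (fun t => ζ * γ ^ t) (Finset.range s : Set ℕ) := by
        intro t ht t' ht' hh
        simp only [Finset.coe_range, Set.mem_Iio] at ht ht'
        exact hγ.pow_inj ht ht' (mul_left_cancel₀ hζ0 hh)
      have hcards : (insert (0 : K) ((Finset.range s).image (fun t => ζ * γ ^ t))).card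
          = s + 1 := by
        rw [Finset.card_insert_of_notMem h0notin, Finset.card_image_of_injOn hinjim,
          Finset.card_range]
      have hle : s + 1 ≤ 2 ^ (z - 1) := by
        rw [← hcards]
        refine le_trans (card_le_natDegree_of_eval_eq_zero p hp0 _ ?_) hpdeg
        intro x hx
        rcases Finset.mem_insert.mp hx with rfl | hx
        · rw [hpeval, hTr0]
        · obtain ⟨t, ht, rfl⟩ := Finset.mem_image.mp hx
          rw [hpeval]
          exact hTrz t (Finset.mem_range.mp ht)
      omega
    refine ⟨H1.image A, ?_, ?_⟩
    · rw [Finset.card_image_of_injOn hAinjOn, hH1card]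
    · intro Aset hAset
      obtain ⟨u, hu, rfl⟩ := Finset.mem_image.mp hAset
      exact ⟨hrec u hu, hAcard u hu⟩
  refine ⟨?_, main⟩
  intro i
  obtain ⟨𝒜, h𝒜card, h𝒜⟩ := main i
  have hne : 𝒜.Nonempty := Finset.card_pos.mp (by
    have : 0 < 2 ^ (z - 1) := by positivity
    omega)
  obtain ⟨A, hA⟩ := hne
  obtain ⟨hrec, hcard⟩ := h𝒜 A hA
  exact ⟨A, le_of_eq hcard, hrec⟩

end LRC
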